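/- Second-moment bound on the averaged stochastic gradient under SGC: with each f_i L-smooth (hence f is L-smooth) and Assumption 3 holding with constant ρ, for any points x_1, ..., x_n with average x̄, E‖(1/n)∑_{i=1}^n ∇f_i(x_i, ξ_i)‖² ≤ 2ρ·E‖∇f(x̄)‖² + 2L²ρ·(1/n)∑_{i=1}^n E‖x_i − x̄‖². -/

import Mathlib

open MeasureTheory ProbabilityTheory
open scoped RealInnerProductSpace
open scoped ENNReal NNReal

-- AM-ish inequality in ENNReal (constant 3 suffices)
lemma smb_sq_add_le (a b : ℝ≥0∞) : (a + b) ^ 2 ≤ 3 * a ^ 2 + 3 * b ^ 2 := by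
  have hab : a * b ≤ a ^ 2 + b ^ 2 := by
    rcases le_total a b with h | h
    · calc a * b ≤ b * b := mul_le_mul_left h b
        _ = b ^ 2 := (sq b).symm
        _ ≤ a ^ 2 + b ^ 2 := le_add_self
    · calc a * b ≤ a * a := mul_le_mul_right h a
        _ = a ^ 2 := (sq a).symm
        _ ≤ a ^ 2 + b ^ 2 := le_self_add
  calc (a + b) ^ 2 = a ^ 2 + 2 * (a * b) + b ^ 2 := by ring
    _ ≤ a ^ 2 + 2 * (a ^ 2 + b ^ 2) + b ^ 2 := by gcongr
    _ = 3 * a ^ 2 + 3 * b ^ 2 := by ring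

lemma smb_integrable_left {d : ℕ} {Ω : Type*} [MeasurableSpace Ω]
    (P : Measure Ω) [IsProbabilityMeasure P]
    (A B : Ω → EuclideanSpace ℝ (Fin d))
    (hA : Measurable A) (hB : Measurable B) (hAB : IndepFun A B P)
    (h : Integrable (fun ω => ‖A ω + B ω‖ ^ 2) P) :
    Integrable (fun ω => ‖A ω‖ ^ 2) P := by
  have hmap : P.map (fun ω => (A ω, B ω)) = (P.map A).prod (P.map B) :=
    (indepFun_iff_map_prod_eq_prod_map_map hA.aemeasurable hB.aemeasurable).mp hAB
  haveI : IsProbabilityMeasure (P.map A) := Measure.isProbabilityMeasure_map hA.aemeasurable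
  haveI : IsProbabilityMeasure (P.map B) := Measure.isProbabilityMeasure_map hB.aemeasurable
  have hfin : ∫⁻ ω, (‖A ω + B ω‖₊ : ℝ≥0∞) ^ 2 ∂P < ⊤ := by
    have := h.hasFiniteIntegral
    simpa [HasFiniteIntegral, nnnorm_pow, nnnorm_norm, ENNReal.coe_pow, enorm_eq_nnnorm] using this
  have hmeas2 : Measurable fun p : EuclideanSpace ℝ (Fin d) × EuclideanSpace ℝ (Fin d) => (‖p.1 + p.2‖₊ : ℝ≥0∞) ^ 2 :=
    ((measurable_fst.add measurable_snd).nnnorm.coe_nnreal_ennreal.pow_const 2)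
  have hfin2 : ∫⁻ b, ∫⁻ a, (‖a + b‖₊ : ℝ≥0∞) ^ 2 ∂(P.map A) ∂(P.map B) < ⊤ := by
    rw [← lintegral_prod_symm _ hmeas2.aemeasurable, ← hmap,
      lintegral_map hmeas2 (hA.prodMk hB)]
    exact hfin
  have hae : ∀ᵐ b ∂(P.map B), ∫⁻ a, (‖a + b‖₊ : ℝ≥0∞) ^ 2 ∂(P.map A) < ⊤ :=
    ae_lt_top (Measurable.lintegral_prod_left hmeas2) hfin2.ne
  obtain ⟨b, hb⟩ := hae.exists
  have hbound : ∫⁻ a, (‖a‖₊ : ℝ≥0∞) ^ 2 ∂(P.map A)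
      ≤ ∫⁻ a, (3 * (‖a + b‖₊ : ℝ≥0∞) ^ 2 + 3 * (‖b‖₊ : ℝ≥0∞) ^ 2) ∂(P.map A) := by
    refine lintegral_mono fun a => ?_
    have h1 : (‖a‖₊ : ℝ≥0∞) ≤ (‖a + b‖₊ : ℝ≥0∞) + (‖b‖₊ : ℝ≥0∞) := by
      have : ‖a‖ ≤ ‖a + b‖ + ‖b‖ := by
        calc ‖a‖ = ‖(a + b) - b‖ := by rw [add_sub_cancel_right]
          _ ≤ ‖a + b‖ + ‖b‖ := norm_sub_le _ _
      exact_mod_cast this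
    calc (‖a‖₊ : ℝ≥0∞) ^ 2 ≤ ((‖a + b‖₊ : ℝ≥0∞) + (‖b‖₊ : ℝ≥0∞)) ^ 2 := by gcongr
      _ ≤ 3 * (‖a + b‖₊ : ℝ≥0∞) ^ 2 + 3 * (‖b‖₊ : ℝ≥0∞) ^ 2 := smb_sq_add_le _ _
  have hAmeas : Measurable fun a : EuclideanSpace ℝ (Fin d) => (‖a + b‖₊ : ℝ≥0∞) ^ 2 :=
    ((measurable_id.add_const b).nnnorm.coe_nnreal_ennreal.pow_const 2)
  have hfin3 : ∫⁻ a, (‖a‖₊ : ℝ≥0∞) ^ 2 ∂(P.map A) < ⊤ := by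
    refine lt_of_le_of_lt hbound ?_
    rw [lintegral_add_right _ measurable_const, lintegral_const,
      lintegral_const_mul _ hAmeas]
    have h1 : (3 : ℝ≥0∞) * ∫⁻ a, (‖a + b‖₊ : ℝ≥0∞) ^ 2 ∂(P.map A) < ⊤ :=
      ENNReal.mul_lt_top (by norm_num) hb
    have h2 : (3 * (‖b‖₊ : ℝ≥0∞) ^ 2) * (P.map A) Set.univ < ⊤ := by
      refine ENNReal.mul_lt_top ?_ (measure_lt_top _ _)
      exact ENNReal.mul_lt_top (by norm_num) (ENNReal.pow_lt_top ENNReal.coe_lt_top)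
    exact ENNReal.add_lt_top.mpr ⟨h1, h2⟩
  refine ⟨(hA.norm.pow_const 2).aestronglyMeasurable, ?_⟩
  rw [HasFiniteIntegral]
  calc ∫⁻ ω, ‖‖A ω‖ ^ 2‖₊ ∂P = ∫⁻ ω, (‖A ω‖₊ : ℝ≥0∞) ^ 2 ∂P := by
        simp [nnnorm_pow, nnnorm_norm, ENNReal.coe_pow]
    _ = ∫⁻ a, (‖a‖₊ : ℝ≥0∞) ^ 2 ∂(P.map A) := by
        rw [lintegral_map (measurable_nnnorm.coe_nnreal_ennreal.pow_const 2) hA]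
    _ < ⊤ := hfin3

/-- Second-moment bound on the averaged stochastic gradient under the strong growth
condition: with each fᵢ L-smooth (hence f L-smooth) and Assumption 3 with constant ρ,
for any points x₁, ..., xₙ with average x̄,
`E‖(1/n) ∑ᵢ ∇fᵢ(xᵢ, ξᵢ)‖² ≤ 2ρ E‖∇f(x̄)‖² + 2L²ρ (1/n) ∑ᵢ E‖xᵢ - x̄‖²`. -/
theorem second_moment_bound_sgc
    {d n : ℕ} (hn : 0 < n)
    {Ω S : Type*} [MeasurableSpace Ω] [MeasurableSpace S]
    -- underlying probability space
    (P : Measure Ω) [IsProbabilityMeasure P]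
    -- local sample distributions
    (D : Fin n → Measure S) (hD : ∀ i, IsProbabilityMeasure (D i))
    -- sample loss functions and their (stochastic) gradients
    (F : Fin n → EuclideanSpace ℝ (Fin d) → S → ℝ)
    (g : Fin n → EuclideanSpace ℝ (Fin d) → S → EuclideanSpace ℝ (Fin d))
    (L : ℝ) (hL : 0 < L)
    (hgmeas : ∀ i, Measurable (fun p : EuclideanSpace ℝ (Fin d) × S => g i p.1 p.2))
    -- integrability of the sample losses and gradients
    (hFint : ∀ i x, Integrable (fun s => F i x s) (D i))
    (hgint : ∀ i x, Integrable (fun s => g i x s) (D i))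
    -- local objectives fᵢ(x) = E_{ξᵢ ∼ Dᵢ}[F i x ξᵢ] and global objective f
    (fi : Fin n → EuclideanSpace ℝ (Fin d) → ℝ)
    (hfi : ∀ i x, fi i x = ∫ s, F i x s ∂(D i))
    (f : EuclideanSpace ℝ (Fin d) → ℝ)
    (hf : ∀ x, f x = (n : ℝ)⁻¹ * ∑ i, fi i x)
    -- each fᵢ is L-smooth: gfi i is its gradient and it is L-Lipschitz
    (gfi : Fin n → EuclideanSpace ℝ (Fin d) → EuclideanSpace ℝ (Fin d))
    (hgfi : ∀ i x, HasGradientAt (fi i) (gfi i x) x)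
    (hsmooth : ∀ i x y, ‖gfi i x - gfi i y‖ ≤ L * ‖x - y‖)
    -- unbiasedness: the expected stochastic gradient is the gradient of fᵢ
    (hunbiased : ∀ i x, (∫ s, g i x s ∂(D i)) = gfi i x)
    -- gradient of the global objective
    (gradf : EuclideanSpace ℝ (Fin d) → EuclideanSpace ℝ (Fin d))
    (hgradf : ∀ x, HasGradientAt f (gradf x) x)
    -- Assumption 3: strong growth condition with constant ρ ≥ 1
    (ρ : ℝ) (hρ : 1 ≤ ρ)
    (hSGC : ∀ i x, ∫ s, ‖g i x s‖ ^ 2 ∂(D i) ≤ ρ * ‖gradf x‖ ^ 2)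
    -- the points x₁, ..., xₙ and their average, and independent samples ξ₁, ..., ξₙ
    (x : Fin n → EuclideanSpace ℝ (Fin d))
    (xbar : EuclideanSpace ℝ (Fin d)) (hxbar : xbar = (n : ℝ)⁻¹ • ∑ i, x i)
    (ξ : Fin n → Ω → S)
    (hξmeas : ∀ i, Measurable (ξ i))
    (hindep : iIndepFun ξ P)
    (hdist : ∀ i, P.map (ξ i) = D i) :
    ∫ ω, ‖(n : ℝ)⁻¹ • ∑ i, g i (x i) (ξ i ω)‖ ^ 2 ∂P
      ≤ 2 * ρ * ‖gradf xbar‖ ^ 2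
        + 2 * L ^ 2 * ρ * ((n : ℝ)⁻¹ * ∑ i, ‖x i - xbar‖ ^ 2) := by
  have hn' : (0 : ℝ) < (n : ℝ) := by exact_mod_cast hn
  have hn0 : (n : ℝ) ≠ 0 := hn'.ne'
  -- the gradient of f is the average of the gfi
  have gradf_eq : ∀ y, gradf y = (n : ℝ)⁻¹ • ∑ i, gfi i y := by
    intro y
    refine (hgradf y).unique ?_
    have h1 : HasFDerivAt (fun z => ∑ i, fi i z)
        (∑ i, InnerProductSpace.toDual ℝ _ (gfi i y)) y :=
      HasFDerivAt.fun_sum fun i _ => (hgfi i y).hasFDerivAt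
    have h2 : HasFDerivAt f ((n : ℝ)⁻¹ • ∑ i, InnerProductSpace.toDual ℝ _ (gfi i y)) y := by
      have h3 := h1.const_mul ((n : ℝ)⁻¹)
      rw [show f = fun y => (n : ℝ)⁻¹ * ∑ i, fi i y from funext hf]
      exact h3
    have h4 : InnerProductSpace.toDual ℝ _ ((n : ℝ)⁻¹ • ∑ i, gfi i y)
        = (n : ℝ)⁻¹ • ∑ i, InnerProductSpace.toDual ℝ _ (gfi i y) := by
      rw [_root_.map_smul, map_sum]
    exact hasGradientAt_iff_hasFDerivAt.mpr (h4 ▸ h2)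
  -- gradf is L-Lipschitz
  have hlip : ∀ a b, ‖gradf a - gradf b‖ ≤ L * ‖a - b‖ := by
    intro a b
    rw [gradf_eq a, gradf_eq b, ← smul_sub, ← Finset.sum_sub_distrib]
    rw [norm_smul]
    have h1 : ‖∑ i, (gfi i a - gfi i b)‖ ≤ ∑ i : Fin n, L * ‖a - b‖ :=
      (norm_sum_le _ _).trans (Finset.sum_le_sum fun i _ => hsmooth i a b)
    have h2 : ‖(n : ℝ)⁻¹‖ = (n : ℝ)⁻¹ := by
      rw [Real.norm_eq_abs, abs_of_nonneg (by positivity)]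
    rw [h2]
    calc (n : ℝ)⁻¹ * ‖∑ i, (gfi i a - gfi i b)‖
        ≤ (n : ℝ)⁻¹ * ∑ i : Fin n, L * ‖a - b‖ := by
          exact mul_le_mul_of_nonneg_left h1 (by positivity)
      _ = L * ‖a - b‖ := by
          rw [Finset.sum_const, Finset.card_univ, Fintype.card_fin, nsmul_eq_mul]
          field_simp
  -- measurability of the per-sample gradients
  have hgim : ∀ i, Measurable (fun s => g i (x i) s) := fun i =>
    (hgmeas i).comp (measurable_const.prodMk measurable_id)
  have hhm : ∀ i, Measurable (fun ω => g i (x i) (ξ i ω)) := fun i =>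
    (hgim i).comp (hξmeas i)
  -- the pointwise convexity bound
  have hconv : ∀ v : Fin n → EuclideanSpace ℝ (Fin d),
      ‖(n : ℝ)⁻¹ • ∑ i, v i‖ ^ 2 ≤ (n : ℝ)⁻¹ * ∑ i, ‖v i‖ ^ 2 := by
    intro v
    rw [norm_smul, Real.norm_eq_abs, abs_of_nonneg (by positivity), mul_pow]
    have h1 : ‖∑ i, v i‖ ^ 2 ≤ (∑ i, ‖v i‖) ^ 2 := by
      have := norm_sum_le Finset.univ v
      nlinarith [norm_nonneg (∑ i, v i), Finset.sum_nonneg (fun i (_ : i ∈ Finset.univ) => norm_nonneg (v i))]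
    have h2 : (∑ i, ‖v i‖) ^ 2 ≤ (n : ℝ) * ∑ i, ‖v i‖ ^ 2 := by
      have := sq_sum_le_card_mul_sum_sq (s := Finset.univ) (f := fun i => ‖v i‖)
      simpa [Finset.card_univ] using this
    calc ((n : ℝ)⁻¹) ^ 2 * ‖∑ i, v i‖ ^ 2 ≤ ((n : ℝ)⁻¹) ^ 2 * ((n : ℝ) * ∑ i, ‖v i‖ ^ 2) := by
          exact mul_le_mul_of_nonneg_left (h1.trans h2) (by positivity)
      _ = (n : ℝ)⁻¹ * ∑ i, ‖v i‖ ^ 2 := by field_simp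
  -- nonnegativity of the right-hand side
  have hrhs : 0 ≤ 2 * ρ * ‖gradf xbar‖ ^ 2
      + 2 * L ^ 2 * ρ * ((n : ℝ)⁻¹ * ∑ i, ‖x i - xbar‖ ^ 2) := by
    have h1 : (0:ℝ) ≤ ∑ i, ‖x i - xbar‖ ^ 2 :=
      Finset.sum_nonneg fun i _ => sq_nonneg _
    have : (0:ℝ) < ρ := lt_of_lt_of_le one_pos hρ
    positivity
  by_cases hInt : ∀ i, Integrable (fun ω => ‖g i (x i) (ξ i ω)‖ ^ 2) P
  · -- integrable case
    have hmono : ∫ ω, ‖(n : ℝ)⁻¹ • ∑ i, g i (x i) (ξ i ω)‖ ^ 2 ∂P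
        ≤ ∫ ω, (n : ℝ)⁻¹ * ∑ i, ‖g i (x i) (ξ i ω)‖ ^ 2 ∂P := by
      refine integral_mono_of_nonneg (Filter.Eventually.of_forall fun ω => by positivity)
        ((integrable_finset_sum _ fun i _ => hInt i).const_mul _)
        (Filter.Eventually.of_forall fun ω => hconv _)
    have hsplit : ∫ ω, (n : ℝ)⁻¹ * ∑ i, ‖g i (x i) (ξ i ω)‖ ^ 2 ∂P
        = (n : ℝ)⁻¹ * ∑ i, ∫ ω, ‖g i (x i) (ξ i ω)‖ ^ 2 ∂P := by
      rw [integral_const_mul, integral_finset_sum _ fun i _ => hInt i]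
    have key : ∀ i, ∫ ω, ‖g i (x i) (ξ i ω)‖ ^ 2 ∂P
        ≤ 2 * ρ * ‖gradf xbar‖ ^ 2 + 2 * L ^ 2 * ρ * ‖x i - xbar‖ ^ 2 := by
      intro i
      have hmap : ∫ ω, ‖g i (x i) (ξ i ω)‖ ^ 2 ∂P = ∫ s, ‖g i (x i) s‖ ^ 2 ∂(D i) := by
        rw [← hdist i, integral_map (hξmeas i).aemeasurable
          ((hgim i).norm.pow_const 2).aestronglyMeasurable]
      rw [hmap]
      refine (hSGC i (x i)).trans ?_
      have hb : ‖gradf (x i)‖ ≤ ‖gradf xbar‖ + L * ‖x i - xbar‖ := by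
        calc ‖gradf (x i)‖ = ‖gradf xbar + (gradf (x i) - gradf xbar)‖ := by
              congr 1; abel
          _ ≤ ‖gradf xbar‖ + ‖gradf (x i) - gradf xbar‖ := norm_add_le _ _
          _ ≤ ‖gradf xbar‖ + L * ‖x i - xbar‖ := by
              exact add_le_add_right (hlip (x i) xbar) _
      have hρ0 : (0:ℝ) < ρ := lt_of_lt_of_le one_pos hρ
      have h2 : ‖gradf (x i)‖ ^ 2 ≤ (‖gradf xbar‖ + L * ‖x i - xbar‖) ^ 2 :=
        pow_le_pow_left₀ (norm_nonneg _) hb 2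
      have h3 : ‖gradf (x i)‖ ^ 2 ≤ 2 * ‖gradf xbar‖ ^ 2 + 2 * L ^ 2 * ‖x i - xbar‖ ^ 2 := by
        nlinarith [sq_nonneg (‖gradf xbar‖ - L * ‖x i - xbar‖)]
      calc ρ * ‖gradf (x i)‖ ^ 2
          ≤ ρ * (2 * ‖gradf xbar‖ ^ 2 + 2 * L ^ 2 * ‖x i - xbar‖ ^ 2) :=
            mul_le_mul_of_nonneg_left h3 hρ0.le
        _ = 2 * ρ * ‖gradf xbar‖ ^ 2 + 2 * L ^ 2 * ρ * ‖x i - xbar‖ ^ 2 := by ring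
    refine hmono.trans ?_
    rw [hsplit]
    have hsum : ∑ i, ∫ ω, ‖g i (x i) (ξ i ω)‖ ^ 2 ∂P
        ≤ ∑ i : Fin n, (2 * ρ * ‖gradf xbar‖ ^ 2 + 2 * L ^ 2 * ρ * ‖x i - xbar‖ ^ 2) :=
      Finset.sum_le_sum fun i _ => key i
    calc (n : ℝ)⁻¹ * ∑ i, ∫ ω, ‖g i (x i) (ξ i ω)‖ ^ 2 ∂P
        ≤ (n : ℝ)⁻¹ * ∑ i : Fin n, (2 * ρ * ‖gradf xbar‖ ^ 2 + 2 * L ^ 2 * ρ * ‖x i - xbar‖ ^ 2) :=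
          mul_le_mul_of_nonneg_left hsum (by positivity)
      _ = 2 * ρ * ‖gradf xbar‖ ^ 2 + 2 * L ^ 2 * ρ * ((n : ℝ)⁻¹ * ∑ i, ‖x i - xbar‖ ^ 2) := by
          rw [Finset.sum_add_distrib, Finset.sum_const, Finset.card_univ, Fintype.card_fin,
            ← Finset.mul_sum]
          field_simp
          ring
  · -- non-integrable case: the LHS integral is 0
    push_neg at hInt
    obtain ⟨j, hj⟩ := hInt
    have hnotInt : ¬ Integrable (fun ω => ‖(n : ℝ)⁻¹ • ∑ i, g i (x i) (ξ i ω)‖ ^ 2) P := by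
      intro hI
      -- integrability of the norm² of the full sum
      have hIsum : Integrable (fun ω => ‖∑ i, g i (x i) (ξ i ω)‖ ^ 2) P := by
        have heq : (fun ω => ‖∑ i, g i (x i) (ξ i ω)‖ ^ 2)
            = fun ω => (n : ℝ) ^ 2 * ‖(n : ℝ)⁻¹ • ∑ i, g i (x i) (ξ i ω)‖ ^ 2 := by
          funext ω
          rw [norm_smul, Real.norm_eq_abs, abs_of_nonneg (by positivity), mul_pow]
          field_simp
        rw [heq]
        exact hI.const_mul _
      -- independence of component j from the rest
      have hindep' : iIndepFun (fun i ω => g i (x i) (ξ i ω)) P :=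
        hindep.comp (fun i s => g i (x i) s) hgim
      have hAB : IndepFun (fun ω => g j (x j) (ξ j ω))
          (∑ i ∈ Finset.univ.erase j, fun ω => g i (x i) (ξ i ω)) P :=
        (hindep'.indepFun_finset_sum_of_notMem hhm (Finset.notMem_erase j Finset.univ)).symm
      have hsumfn : (∑ i ∈ Finset.univ.erase j, fun ω => g i (x i) (ξ i ω))
          = fun ω => ∑ i ∈ Finset.univ.erase j, g i (x i) (ξ i ω) := by
        funext ω; simp [Finset.sum_apply]
      have hBm : Measurable (∑ i ∈ Finset.univ.erase j, fun ω => g i (x i) (ξ i ω)) := by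
        rw [hsumfn]; exact Finset.measurable_sum _ fun i _ => hhm i
      have hadd : (fun ω => ‖(fun ω => g j (x j) (ξ j ω)) ω
            + (∑ i ∈ Finset.univ.erase j, fun ω => g i (x i) (ξ i ω)) ω‖ ^ 2)
          = fun ω => ‖∑ i, g i (x i) (ξ i ω)‖ ^ 2 := by
        funext ω
        congr 1
        rw [Finset.sum_apply]
        rw [← Finset.add_sum_erase Finset.univ _ (Finset.mem_univ j)]
      have := smb_integrable_left P (fun ω => g j (x j) (ξ j ω))
        (∑ i ∈ Finset.univ.erase j, fun ω => g i (x i) (ξ i ω)) (hhm j) hBm hAB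
        (by rw [hadd]; exact hIsum)
      exact hj this
    rw [integral_undef hnotInt]
    exact hrhs
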